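/- Let K be a field, k ≥ 2, and let the recurrence data α_j, β_j, γ_j ∈ K with α_j ≠ 0 define the polynomials φ_j as usual. Fix λ_0 ∈ K and set φ := Φ_k(λ_0) ∈ K^k (evaluation of the basis at λ_0, whose last coordinate is 1). Let D_i ∈ K^{m×m} (i = 0,…,k), D_0^{ev} := Σ_{i=0}^{k} D_i φ_i(λ_0), let A ∈ K^{n×n}, B ∈ K^{n×m}, C ∈ K^{m×n}, and let X, Y ∈ K^{n×n} and K_0 := [v⊗I_m, H] ∈ K^{km×km} (v ∈ K^k, H ∈ K^{km×(k−1)m}) all be invertible, and assume λ_0I_n − A is invertible. Set G_0 := D_0^{ev} + C(λ_0I_n−A)^{−1}B, L_0 := K_0·F_Φ^D(λ_0), and 𝓛_0 := [[X(λ_0I_n−A)Y, [0_{n×(k−1)m}, XB]], [−(v⊗I_m)CY, L_0]] ∈ K^{(n+km)×(n+km)}. Then: (a) if 𝓛_0·(y;x) = 0 with (y;x) ≠ 0, where y ∈ K^n and x ∈ K^{km} has blocks x^{(1)},…,x^{(k)} ∈ K^m, then x^{(k)} ≠ 0, x = φ ⊗ x^{(k)}, and G_0·x^{(k)} = 0;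 (b) conversely, if G_0 u = 0 with u ≠ 0, and x := φ⊗u, y := −Y^{−1}(λ_0I_n−A)^{−1}Bu, then 𝓛_0·(y;x) = 0 and (y;x) ≠ 0. -/

import Mathlib

open Matrix

/-- The matrix `v ⊗ I_m ∈ R^{km×m}` built from a vector `v ∈ R^k`. -/
def vKron {R : Type*} [Semiring R] (k m : ℕ) (v : Fin k → R) :
    Matrix (Fin k × Fin m) (Fin m) R :=
  Matrix.of fun p j => if p.2 = j then v p.1 else 0

/-- Evaluation of the pencil `M_Φ(λ) ∈ F[λ]^{(k-1)×k}` at `λ₀`. -/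
noncomputable def MPhiEval {K : Type*} [Field K] (α β γ : ℕ → K) (k : ℕ) (lam0 : K) :
    Matrix (Fin (k - 1)) (Fin k) K :=
  Matrix.of fun i j =>
    if (j : ℕ) = (i : ℕ) then -(α (k - 2 - (i : ℕ)))
    else if (j : ℕ) = (i : ℕ) + 1 then lam0 - β (k - 2 - (i : ℕ))
    else if (j : ℕ) = (i : ℕ) + 2 then -(γ (k - 2 - (i : ℕ)))
    else 0

/-- Evaluation of the block row `m_Φ^D(λ) ∈ F[λ]^{m×km}` at `λ₀`. -/
noncomputable def mPhiEval {K : Type*} [Field K] (α β γ : ℕ → K) (k m : ℕ)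
    (D : ℕ → Matrix (Fin m) (Fin m) K) (lam0 : K) :
    Matrix (Fin m) (Fin k × Fin m) K :=
  Matrix.of fun r c =>
    if (c.1 : ℕ) = 0 then
      (α (k - 1))⁻¹ * (lam0 - β (k - 1)) * D k r c.2 + D (k - 1) r c.2
    else if (c.1 : ℕ) = 1 then
      D (k - 2) r c.2 - (α (k - 1))⁻¹ * γ (k - 1) * D k r c.2
    else D (k - 1 - (c.1 : ℕ)) r c.2

/-- Evaluation of the pencil `F_Φ^D(λ) = [m_Φ^D(λ); M_Φ(λ) ⊗ I_m]` at `λ₀`. -/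
noncomputable def FPhiEval {K : Type*} [Field K] (α β γ : ℕ → K) (k m : ℕ)
    (D : ℕ → Matrix (Fin m) (Fin m) K) (lam0 : K) :
    Matrix (Fin k × Fin m) (Fin k × Fin m) K :=
  Matrix.of fun p q =>
    if h : (p.1 : ℕ) = 0 then mPhiEval α β γ k m D lam0 p.2 q
    else
      MPhiEval α β γ k lam0 ⟨(p.1 : ℕ) - 1, by have := p.1.isLt; omega⟩ q.1
        * (if p.2 = q.2 then 1 else 0)

/-- The constant `km × km` matrix `[v ⊗ I_m, H]`. -/
def concatKron {K : Type*} [Field K] (k m : ℕ) (v : Fin k → K)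
    (H : Matrix (Fin k × Fin m) (Fin (k - 1) × Fin m) K) :
    Matrix (Fin k × Fin m) (Fin k × Fin m) K :=
  Matrix.of fun p q =>
    if h : (q.1 : ℕ) = 0 then (if p.2 = q.2 then v p.1 else 0)
    else H p (⟨(q.1 : ℕ) - 1, by have := q.1.isLt; omega⟩, q.2)

section Aux

variable {K : Type*} [Field K]

theorem vec_eq_zero_of_isUnit_det {p : Type*} [Fintype p] [DecidableEq p]
    {M : Matrix p p K} (h : IsUnit M.det) {w : p → K} (hw : M *ᵥ w = 0) : w = 0 := by
  have hM : IsUnit M := (Matrix.isUnit_iff_isUnit_det M).mpr h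
  have hinj := Matrix.mulVec_injective_iff_isUnit.mpr hM
  apply hinj
  rw [hw, Matrix.mulVec_zero]

theorem mphi_row (α β γ : ℕ → K) {k : ℕ} (lam0 : K) (hk : 2 ≤ k)
    (i' : Fin (k - 1)) (g : Fin k → K) :
    ∑ j : Fin k, MPhiEval α β γ k lam0 i' j * g j
      = -(α (k - 2 - (i' : ℕ))) * g ⟨(i' : ℕ), by have := i'.isLt; omega⟩
        + (lam0 - β (k - 2 - (i' : ℕ))) * g ⟨(i' : ℕ) + 1, by have := i'.isLt; omega⟩
        + (if h : (i' : ℕ) + 2 < k then -(γ (k - 2 - (i' : ℕ))) * g ⟨(i' : ℕ) + 2, h⟩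
           else 0) := by
  have key : ∀ j : Fin k, MPhiEval α β γ k lam0 i' j * g j
      = (if j = (⟨(i' : ℕ), by have := i'.isLt; omega⟩ : Fin k)
           then -(α (k - 2 - (i' : ℕ))) * g j else 0)
      + (if j = (⟨(i' : ℕ) + 1, by have := i'.isLt; omega⟩ : Fin k)
           then (lam0 - β (k - 2 - (i' : ℕ))) * g j else 0)
      + (if h : (i' : ℕ) + 2 < k then
           (if j = (⟨(i' : ℕ) + 2, h⟩ : Fin k) then -(γ (k - 2 - (i' : ℕ))) * g j else 0)
         else 0) := by
    intro j
    rcases j with ⟨j, hj⟩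
    simp only [MPhiEval, Matrix.of_apply, Fin.mk.injEq]
    split_ifs <;> first | ring1 | (exfalso; omega)
  rw [Finset.sum_congr rfl fun j _ => key j]
  rw [Finset.sum_add_distrib, Finset.sum_add_distrib]
  congr 1
  · congr 1
    · simp
    · simp
  · by_cases hd : (i' : ℕ) + 2 < k
    · simp [hd]
    · simp [hd]

theorem mphi_row_psi (α β γ : ℕ → K) {k : ℕ} (lam0 : K) (hk : 2 ≤ k)
    (ψ : ℕ → K)
    (hψrec : ∀ j : ℕ, α j * ψ (j + 1)
      = (lam0 - β j) * ψ j - γ j * (if j = 0 then 0 else ψ (j - 1)))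
    (i' : Fin (k - 1)) :
    ∑ j : Fin k, MPhiEval α β γ k lam0 i' j * ψ (k - 1 - (j : ℕ)) = 0 := by
  have hi := i'.isLt
  rw [mphi_row α β γ lam0 hk i' (fun j => ψ (k - 1 - (j : ℕ)))]
  simp only
  by_cases hd : (i' : ℕ) + 2 < k
  · rw [dif_pos hd]
    have h1 : k - 1 - ((⟨(i' : ℕ), by omega⟩ : Fin k) : ℕ) = (k - 2 - (i' : ℕ)) + 1 := by
      simp; omega
    have h2 : k - 1 - ((⟨(i' : ℕ) + 1, by omega⟩ : Fin k) : ℕ) = k - 2 - (i' : ℕ) := by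
      simp; omega
    have h3 : k - 1 - ((⟨(i' : ℕ) + 2, hd⟩ : Fin k) : ℕ) = (k - 2 - (i' : ℕ)) - 1 := by
      simp; omega
    rw [h1, h2, h3]
    have hr := hψrec (k - 2 - (i' : ℕ))
    rw [if_neg (by omega)] at hr
    linear_combination -hr
  · rw [dif_neg hd]
    have h1 : k - 1 - ((⟨(i' : ℕ), by omega⟩ : Fin k) : ℕ) = 1 := by simp; omega
    have h2 : k - 1 - ((⟨(i' : ℕ) + 1, by omega⟩ : Fin k) : ℕ) = 0 := by simp; omega
    have h4 : k - 2 - (i' : ℕ) = 0 := by omega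
    rw [h1, h2, h4]
    have hr := hψrec 0
    rw [if_pos rfl] at hr
    linear_combination -hr
end Aux

section Aux2
variable {K : Type*} [Field K]

theorem mphi_apply_kron (α β γ : ℕ → K) {k m : ℕ} (hk : 2 ≤ k)
    (hα : α (k - 1) ≠ 0) (lam0 : K) (ψ : ℕ → K)
    (hψrec : ∀ j : ℕ, α j * ψ (j + 1)
      = (lam0 - β j) * ψ j - γ j * (if j = 0 then 0 else ψ (j - 1)))
    (D : ℕ → Matrix (Fin m) (Fin m) K) (r s : Fin m) :
    ∑ j : Fin k, mPhiEval α β γ k m D lam0 r (j, s) * ψ (k - 1 - (j : ℕ))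
      = ∑ i ∈ Finset.range (k + 1), ψ i * D i r s := by
  set d : ℕ → K := fun i => D i r s with hd
  set c : ℕ → K := fun j =>
    if j = 0 then (α (k - 1))⁻¹ * (lam0 - β (k - 1)) * d k + d (k - 1)
    else if j = 1 then d (k - 2) - (α (k - 1))⁻¹ * γ (k - 1) * d k
    else d (k - 1 - j) with hc
  have hcoef : ∀ j : Fin k, mPhiEval α β γ k m D lam0 r (j, s) = c (j : ℕ) := by
    intro j; simp only [mPhiEval, Matrix.of_apply, hc, hd]
  have hψk : ψ k = (α (k - 1))⁻¹ * ((lam0 - β (k - 1)) * ψ (k - 1) - γ (k - 1) * ψ (k - 2)) := by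
    have hr := hψrec (k - 1)
    rw [if_neg (by omega)] at hr
    have e1 : k - 1 + 1 = k := by omega
    have e2 : k - 1 - 1 = k - 2 := by omega
    rw [e1, e2] at hr
    field_simp
    linear_combination hr
  calc ∑ j : Fin k, mPhiEval α β γ k m D lam0 r (j, s) * ψ (k - 1 - (j : ℕ))
      = ∑ j ∈ Finset.range k, c j * ψ (k - 1 - j) := by
        rw [← Fin.sum_univ_eq_sum_range (fun j => c j * ψ (k - 1 - j)) k]
        exact Finset.sum_congr rfl fun j _ => by rw [hcoef]
    _ = ∑ j ∈ Finset.range k, c (k - 1 - j) * ψ (k - 1 - (k - 1 - j)) :=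
        (Finset.sum_range_reflect (fun j => c j * ψ (k - 1 - j)) k).symm
    _ = ∑ j ∈ Finset.range k, c (k - 1 - j) * ψ j := by
        refine Finset.sum_congr rfl fun j hj => ?_
        rw [Finset.mem_range] at hj
        have : k - 1 - (k - 1 - j) = j := by omega
        rw [this]
    _ = ∑ i ∈ Finset.range (k + 1), ψ i * d i := by
        have ek : k = (k - 2) + 1 + 1 := by omega
        have ek1 : k + 1 = (k - 2) + 1 + 1 + 1 := by omega
        rw [ek1, Finset.sum_range_succ, Finset.sum_range_succ, Finset.sum_range_succ]
        nth_rewrite 1 [ek]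
        rw [Finset.sum_range_succ, Finset.sum_range_succ]
        have e1 : k - 1 - (k - 2) = 1 := by omega
        have e2 : k - 1 - (k - 2 + 1) = 0 := by omega
        have e3 : k - 2 + 1 = k - 1 := by omega
        have e4 : k - 2 + 1 + 1 = k := by omega
        rw [e1, e2, e3, e4]
        have hsum : ∑ j ∈ Finset.range (k - 2), c (k - 1 - j) * ψ j
            = ∑ j ∈ Finset.range (k - 2), ψ j * d j := by
          refine Finset.sum_congr rfl fun j hj => ?_
          rw [Finset.mem_range] at hj
          have h0 : ¬(k - 1 - j = 0) := by omega
          have h1 : ¬(k - 1 - j = 1) := by omega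
          have h2 : k - 1 - (k - 1 - j) = j := by omega
          rw [hc]; simp only [if_neg h0, if_neg h1, h2]; ring
        rw [hsum, hc, hψk]
        norm_num
        ring
end Aux2

section Aux3
variable {K : Type*} [Field K]

theorem F_mulVec_ne (α β γ : ℕ → K) {k m : ℕ}
    (D : ℕ → Matrix (Fin m) (Fin m) K) (lam0 : K)
    (x : Fin k × Fin m → K) (i : Fin k) (hi : (i : ℕ) ≠ 0) (r : Fin m) :
    (FPhiEval α β γ k m D lam0 *ᵥ x) (i, r)
      = ∑ j : Fin k,
          MPhiEval α β γ k lam0 ⟨(i : ℕ) - 1, by have := i.isLt; omega⟩ j * x (j, r) := by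
  have hent : ∀ (j : Fin k) (s : Fin m),
      FPhiEval α β γ k m D lam0 (i, r) (j, s)
        = MPhiEval α β γ k lam0 ⟨(i : ℕ) - 1, by have := i.isLt; omega⟩ j
            * (if r = s then 1 else 0) := by
    intro j s
    simp only [FPhiEval, Matrix.of_apply]
    rw [dif_neg hi]
  simp only [Matrix.mulVec, dotProduct]
  rw [Fintype.sum_prod_type]
  refine Finset.sum_congr rfl fun j _ => ?_
  rw [Finset.sum_congr rfl fun s _ => by rw [hent j s]]
  simp only [mul_ite, mul_one, mul_zero, ite_mul, zero_mul]
  rw [Finset.sum_ite_eq]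
  simp

theorem F_mulVec_zero (α β γ : ℕ → K) {k m : ℕ}
    (D : ℕ → Matrix (Fin m) (Fin m) K) (lam0 : K)
    (x : Fin k × Fin m → K) (i : Fin k) (hi : (i : ℕ) = 0) (r : Fin m) :
    (FPhiEval α β γ k m D lam0 *ᵥ x) (i, r)
      = ∑ q : Fin k × Fin m, mPhiEval α β γ k m D lam0 r q * x q := by
  simp only [Matrix.mulVec, dotProduct, FPhiEval, Matrix.of_apply]
  refine Finset.sum_congr rfl fun q _ => ?_
  rw [dif_pos hi]

theorem F_mulVec_kron (α β γ : ℕ → K) {k m : ℕ} (hk : 2 ≤ k)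
    (hα : α (k - 1) ≠ 0) (lam0 : K) (ψ : ℕ → K)
    (hψrec : ∀ j : ℕ, α j * ψ (j + 1)
      = (lam0 - β j) * ψ j - γ j * (if j = 0 then 0 else ψ (j - 1)))
    (D : ℕ → Matrix (Fin m) (Fin m) K) (w : Fin m → K) :
    FPhiEval α β γ k m D lam0 *ᵥ (fun p => ψ (k - 1 - (p.1 : ℕ)) * w p.2)
      = fun p => if (p.1 : ℕ) = 0
          then ((∑ i ∈ Finset.range (k + 1), ψ i • D i) *ᵥ w) p.2 else 0 := by
  funext p
  rcases p with ⟨i, r⟩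
  by_cases hi : (i : ℕ) = 0
  · rw [F_mulVec_zero α β γ D lam0 _ i hi r, if_pos hi]
    rw [Fintype.sum_prod_type]
    calc ∑ j : Fin k, ∑ s : Fin m,
            mPhiEval α β γ k m D lam0 r (j, s) * (ψ (k - 1 - (j : ℕ)) * w s)
        = ∑ s : Fin m, (∑ j : Fin k,
            mPhiEval α β γ k m D lam0 r (j, s) * ψ (k - 1 - (j : ℕ))) * w s := by
          rw [Finset.sum_comm]
          refine Finset.sum_congr rfl fun s _ => ?_
          rw [Finset.sum_mul]
          exact Finset.sum_congr rfl fun j _ => by ring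
      _ = ∑ s : Fin m, ((∑ i ∈ Finset.range (k + 1), ψ i • D i) r s) * w s := by
          refine Finset.sum_congr rfl fun s _ => ?_
          rw [mphi_apply_kron α β γ hk hα lam0 ψ hψrec D r s]
          congr 1
          simp [Matrix.sum_apply, Matrix.smul_apply, smul_eq_mul]
      _ = _ := rfl
  · rw [F_mulVec_ne α β γ D lam0 _ i hi r, if_neg hi]
    have h0 : ∑ j : Fin k,
        MPhiEval α β γ k lam0 ⟨(i : ℕ) - 1, by have := i.isLt; omega⟩ j
          * ψ (k - 1 - (j : ℕ)) = 0 :=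
      mphi_row_psi α β γ lam0 hk ψ hψrec _
    calc ∑ j : Fin k,
          MPhiEval α β γ k lam0 ⟨(i : ℕ) - 1, by have := i.isLt; omega⟩ j
            * (ψ (k - 1 - (j : ℕ)) * w r)
        = (∑ j : Fin k,
            MPhiEval α β γ k lam0 ⟨(i : ℕ) - 1, by have := i.isLt; omega⟩ j
              * ψ (k - 1 - (j : ℕ))) * w r := by
          rw [Finset.sum_mul]
          exact Finset.sum_congr rfl fun j _ => by ring
      _ = 0 := by rw [h0, zero_mul]

def E0mat (K : Type*) [Field K] (k m : ℕ) : Matrix (Fin k × Fin m) (Fin m) K :=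
  Matrix.of fun p r => if (p.1 : ℕ) = 0 ∧ p.2 = r then 1 else 0

theorem concatKron_mul_E0 {k m : ℕ} (hk : 0 < k) (v : Fin k → K)
    (H : Matrix (Fin k × Fin m) (Fin (k - 1) × Fin m) K) :
    concatKron k m v H * E0mat K k m = vKron k m v := by
  ext p r
  rw [Matrix.mul_apply]
  have key : ∀ q : Fin k × Fin m,
      concatKron k m v H p q * E0mat K k m q r
        = if q = ((⟨0, hk⟩ : Fin k), r) then concatKron k m v H p q else 0 := by
    intro q
    rcases q with ⟨⟨j, hj⟩, s⟩
    simp only [E0mat, Matrix.of_apply, Prod.mk.injEq, Fin.mk.injEq]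
    by_cases h1 : j = 0
    · by_cases h2 : s = r
      · simp [h1, h2]
      · simp [h1, h2]
    · simp [h1]
  rw [Finset.sum_congr rfl fun q _ => key q, Finset.sum_ite_eq']
  simp [concatKron, vKron]

theorem E0_mulVec {k m : ℕ} (z : Fin m → K) :
    E0mat K k m *ᵥ z = fun p => if (p.1 : ℕ) = 0 then z p.2 else 0 := by
  funext p
  simp only [Matrix.mulVec, dotProduct, E0mat, Matrix.of_apply]
  by_cases h : (p.1 : ℕ) = 0
  · rw [if_pos h]
    have key : ∀ r', (if (p.1 : ℕ) = 0 ∧ p.2 = r' then (1 : K) else 0) * z r'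
        = (if p.2 = r' then z r' else 0) := by
      intro r'; by_cases h2 : p.2 = r' <;> simp [h, h2]
    rw [Finset.sum_congr rfl fun r' _ => key r']
    rw [Finset.sum_ite_eq]
    simp
  · rw [if_neg h]
    refine Finset.sum_eq_zero fun r _ => ?_
    rw [if_neg (by tauto), zero_mul]

theorem topright_mulVec {n k m : ℕ} (hk : 2 ≤ k) (M : Matrix (Fin n) (Fin m) K)
    (x : Fin k × Fin m → K) :
    (Matrix.of fun r (q : Fin k × Fin m) =>
        if (q.1 : ℕ) = k - 1 then M r q.2 else 0) *ᵥ x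
      = M *ᵥ (fun s => x (⟨k - 1, Nat.sub_lt (by omega) Nat.one_pos⟩, s)) := by
  funext r
  simp only [Matrix.mulVec, dotProduct, Matrix.of_apply]
  rw [Fintype.sum_prod_type]
  have key : ∀ j : Fin k,
      ∑ s : Fin m, (if (j : ℕ) = k - 1 then M r s else 0) * x (j, s)
        = if j = (⟨k - 1, by omega⟩ : Fin k) then ∑ s, M r s * x (j, s) else 0 := by
    intro j
    rcases j with ⟨j, hj⟩
    simp only [Fin.mk.injEq]
    by_cases h : j = k - 1
    · simp [h, Finset.mul_sum]
    · simp [h]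
  rw [Finset.sum_congr rfl fun j _ => key j, Finset.sum_ite_eq']
  simp

set_option maxHeartbeats 2000000 in
theorem recover_x (α β γ : ℕ → K) {k m : ℕ} (hk : 2 ≤ k)
    (hα : ∀ j, α j ≠ 0) (lam0 : K) (ψ : ℕ → K) (hψ0 : ψ 0 = 1)
    (hψrec : ∀ j : ℕ, α j * ψ (j + 1)
      = (lam0 - β j) * ψ j - γ j * (if j = 0 then 0 else ψ (j - 1)))
    (x : Fin k × Fin m → K)
    (hx : ∀ (i' : Fin (k - 1)) (r : Fin m),
      ∑ j : Fin k, MPhiEval α β γ k lam0 i' j * x (j, r) = 0) :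
    ∀ (t : ℕ), t ≤ k - 1 → ∀ (r : Fin m),
      x (⟨k - 1 - t, by omega⟩, r) = ψ t * x (⟨k - 1, Nat.sub_lt (by omega) Nat.one_pos⟩, r) := by
  have hrow : ∀ s : ℕ, s + 1 ≤ k - 1 → ∀ r : Fin m,
      α s * x (⟨k - 1 - (s + 1), by omega⟩, r)
        = (lam0 - β s) * x (⟨k - 1 - s, by omega⟩, r)
          - γ s * (if s = 0 then 0 else x (⟨k - 1 - (s - 1), by omega⟩, r)) := by
    intro s hs r
    have h0 := mphi_row α β γ lam0 hk (⟨k - 2 - s, by omega⟩ : Fin (k - 1))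
      (fun j => x (j, r))
    rw [hx ⟨k - 2 - s, by omega⟩ r] at h0
    simp only [Fin.val_mk] at h0
    rw [(by omega : k - 2 - (k - 2 - s) = s)] at h0
    have e1 : (⟨k - 2 - s, by omega⟩ : Fin k) = ⟨k - 1 - (s + 1), by omega⟩ :=
      Fin.mk_eq_mk.mpr (by omega)
    have e2 : (⟨k - 2 - s + 1, by omega⟩ : Fin k) = ⟨k - 1 - s, by omega⟩ :=
      Fin.mk_eq_mk.mpr (by omega)
    rw [e1, e2] at h0
    by_cases hs0 : s = 0
    · subst hs0
      rw [dif_neg (by omega : ¬(k - 2 - 0 + 2 < k))] at h0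
      rw [if_pos rfl]
      linear_combination h0
    · rw [dif_pos (by omega : k - 2 - s + 2 < k)] at h0
      have e3 : (⟨k - 2 - s + 2, by omega⟩ : Fin k) = ⟨k - 1 - (s - 1), by omega⟩ :=
        Fin.mk_eq_mk.mpr (by omega)
      rw [e3] at h0
      rw [if_neg hs0]
      linear_combination h0
  intro t
  induction t using Nat.strong_induction_on with
  | _ t IH =>
    intro ht r
    match t with
    | 0 => simp [hψ0]
    | (s + 1) =>
      have h1 := hrow s ht r
      have h2 : x (⟨k - 1 - s, by omega⟩, r) = ψ s * x (⟨k - 1, by omega⟩, r) :=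
        IH s (by omega) (by omega) r
      rw [h2] at h1
      by_cases hs0 : s = 0
      · subst hs0
        rw [if_pos rfl] at h1
        have hr := hψrec 0
        rw [if_pos rfl] at hr
        have key : α 0 * x (⟨k - 1 - (0 + 1), by omega⟩, r)
            = α 0 * (ψ (0 + 1) * x (⟨k - 1, by omega⟩, r)) := by
          linear_combination h1 - x (⟨k - 1, by omega⟩, r) * hr
        exact mul_left_cancel₀ (hα 0) key
      · rw [if_neg hs0] at h1
        have h3 : x (⟨k - 1 - (s - 1), by omega⟩, r)
            = ψ (s - 1) * x (⟨k - 1, by omega⟩, r) :=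
          IH (s - 1) (by omega) (by omega) r
        rw [h3] at h1
        have hr := hψrec s
        rw [if_neg hs0] at hr
        have key : α s * x (⟨k - 1 - (s + 1), by omega⟩, r)
            = α s * (ψ (s + 1) * x (⟨k - 1, by omega⟩, r)) := by
          linear_combination h1 - x (⟨k - 1, by omega⟩, r) * hr
        exact mul_left_cancel₀ (hα s) key
end Aux3

set_option maxHeartbeats 2000000 in
/-- Recovery of right eigenvectors of a rational matrix from those of an
`𝕄₁`-strong linearization, evaluated at `λ₀` with `det(λ₀I_n − A) ≠ 0`. -/
theorem recovery_right_eigenvectors_M1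
    {K : Type*} [Field K] {m n k : ℕ} (hk : 2 ≤ k)
    (α β γ : ℕ → K) (hα : ∀ j, α j ≠ 0) (lam0 : K)
    (ψ : ℕ → K) (hψ0 : ψ 0 = 1)
    (hψrec : ∀ j : ℕ, α j * ψ (j + 1)
      = (lam0 - β j) * ψ j - γ j * (if j = 0 then 0 else ψ (j - 1)))
    (D : ℕ → Matrix (Fin m) (Fin m) K)
    (A X Y : Matrix (Fin n) (Fin n) K) (B : Matrix (Fin n) (Fin m) K)
    (C : Matrix (Fin m) (Fin n) K)
    (v : Fin k → K) (H : Matrix (Fin k × Fin m) (Fin (k - 1) × Fin m) K)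
    (hX : IsUnit X.det) (hY : IsUnit Y.det)
    (hK0 : IsUnit (concatKron k m v H).det)
    (Λ₀ : Matrix (Fin n) (Fin n) K)
    (hΛ₀ : Λ₀ = Matrix.diagonal (fun _ => lam0) - A)
    (hAreg : IsUnit Λ₀.det)
    (G₀ : Matrix (Fin m) (Fin m) K)
    (hG₀ : G₀ = (∑ i ∈ Finset.range (k + 1), ψ i • D i) + C * Λ₀⁻¹ * B)
    (L₀ : Matrix (Fin k × Fin m) (Fin k × Fin m) K)
    (hL₀ : L₀ = concatKron k m v H * FPhiEval α β γ k m D lam0)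
    (𝓛₀ : Matrix (Fin n ⊕ (Fin k × Fin m)) (Fin n ⊕ (Fin k × Fin m)) K)
    (h𝓛₀ : 𝓛₀ = Matrix.fromBlocks (X * Λ₀ * Y)
        (Matrix.of fun r (q : Fin k × Fin m) =>
          if (q.1 : ℕ) = k - 1 then (X * B) r q.2 else 0)
        (-(vKron k m v * C * Y)) L₀) :
    (∀ (y : Fin n → K) (x : Fin k × Fin m → K),
      𝓛₀ *ᵥ Sum.elim y x = 0 → Sum.elim y x ≠ 0 →
        (fun r : Fin m => x (⟨k - 1, by omega⟩, r)) ≠ 0 ∧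
        x = (fun p : Fin k × Fin m =>
          ψ (k - 1 - (p.1 : ℕ)) * x (⟨k - 1, by omega⟩, p.2)) ∧
        G₀ *ᵥ (fun r : Fin m => x (⟨k - 1, by omega⟩, r)) = 0) ∧
    (∀ u : Fin m → K, G₀ *ᵥ u = 0 → u ≠ 0 →
      𝓛₀ *ᵥ Sum.elim (-((Y⁻¹ * Λ₀⁻¹ * B) *ᵥ u))
          (fun p : Fin k × Fin m => ψ (k - 1 - (p.1 : ℕ)) * u p.2) = 0 ∧
      Sum.elim (-((Y⁻¹ * Λ₀⁻¹ * B) *ᵥ u))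
          (fun p : Fin k × Fin m => ψ (k - 1 - (p.1 : ℕ)) * u p.2) ≠ 0) := by
  have hk0 : 0 < k := by omega
  have hkk : k - 1 < k := by omega
  have hKE : concatKron k m v H * E0mat K k m = vKron k m v := concatKron_mul_E0 hk0 v H
  have hΛY : IsUnit (Λ₀ * Y).det := by rw [Matrix.det_mul]; exact hAreg.mul hY
  constructor
  · -- part (a)
    intro y x hzero hne
    rw [h𝓛₀, Matrix.fromBlocks_mulVec] at hzero
    simp only [Sum.elim_comp_inl, Sum.elim_comp_inr] at hzero
    have h1 : (X * Λ₀ * Y) *ᵥ y + (Matrix.of fun r (q : Fin k × Fin m) =>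
        if (q.1 : ℕ) = k - 1 then (X * B) r q.2 else 0) *ᵥ x = 0 := by
      funext r; exact congrFun hzero (Sum.inl r)
    have h2 : (-(vKron k m v * C * Y)) *ᵥ y + L₀ *ᵥ x = 0 := by
      funext p; exact congrFun hzero (Sum.inr p)
    set w : Fin m → K := fun r => x (⟨k - 1, hkk⟩, r) with hw
    -- top block
    rw [topright_mulVec hk (X * B) x] at h1
    have hEq1 : (Λ₀ * Y) *ᵥ y + B *ᵥ w = 0 := by
      apply vec_eq_zero_of_isUnit_det hX
      rw [Matrix.mulVec_add, Matrix.mulVec_mulVec, Matrix.mulVec_mulVec, ← Matrix.mul_assoc]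
      exact h1
    -- bottom block
    have h2' : concatKron k m v H *ᵥ
        (FPhiEval α β γ k m D lam0 *ᵥ x - (E0mat K k m * C * Y) *ᵥ y) = 0 := by
      rw [Matrix.mulVec_sub, Matrix.mulVec_mulVec, Matrix.mulVec_mulVec, ← hL₀]
      have hid : concatKron k m v H * (E0mat K k m * C * Y) = vKron k m v * C * Y := by
        rw [← Matrix.mul_assoc, ← Matrix.mul_assoc, hKE]
      rw [hid]
      rw [Matrix.neg_mulVec] at h2
      linear_combination (norm := module) h2
    have hFx : FPhiEval α β γ k m D lam0 *ᵥ x = (E0mat K k m * C * Y) *ᵥ y :=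
      sub_eq_zero.mp (vec_eq_zero_of_isUnit_det hK0 h2')
    have hE : (E0mat K k m * C * Y) *ᵥ y
        = fun p : Fin k × Fin m => if (p.1 : ℕ) = 0 then ((C * Y) *ᵥ y) p.2 else 0 := by
      rw [Matrix.mul_assoc, ← Matrix.mulVec_mulVec, E0_mulVec]
    have hFx3 : FPhiEval α β γ k m D lam0 *ᵥ x
        = fun p : Fin k × Fin m => if (p.1 : ℕ) = 0 then ((C * Y) *ᵥ y) p.2 else 0 :=
      hFx.trans hE
    -- rows of M_Phi kill x
    have hrows : ∀ (i' : Fin (k - 1)) (r : Fin m),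
        ∑ j : Fin k, MPhiEval α β γ k lam0 i' j * x (j, r) = 0 := by
      intro i' r
      have hlt : (i' : ℕ) + 1 < k := by have := i'.isLt; omega
      have hp := congrFun hFx3 (⟨(i' : ℕ) + 1, hlt⟩, r)
      rw [F_mulVec_ne α β γ D lam0 x ⟨(i' : ℕ) + 1, hlt⟩ (by simp) r] at hp
      have heqidx : (⟨((⟨(i' : ℕ) + 1, hlt⟩ : Fin k) : ℕ) - 1,
          by have := i'.isLt; omega⟩ : Fin (k - 1)) = i' := by
        apply Fin.ext; simp
      rw [heqidx] at hp
      simpa using hp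
    have hrec := recover_x α β γ hk hα lam0 ψ hψ0 hψrec x hrows
    have hxstruct : x = fun p : Fin k × Fin m =>
        ψ (k - 1 - (p.1 : ℕ)) * x (⟨k - 1, hkk⟩, p.2) := by
      funext p
      rcases p with ⟨i, s⟩
      have hi := i.isLt
      have h3 := hrec (k - 1 - (i : ℕ)) (by omega) s
      have e : (⟨k - 1 - (k - 1 - (i : ℕ)), by omega⟩ : Fin k) = i := by
        apply Fin.ext; simp; omega
      rw [e] at h3
      exact h3
    -- express F *ᵥ x via P *ᵥ w
    have hFx2 : FPhiEval α β γ k m D lam0 *ᵥ x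
        = fun p : Fin k × Fin m => if (p.1 : ℕ) = 0
            then (((∑ i ∈ Finset.range (k + 1), ψ i • D i) *ᵥ w) p.2) else 0 := by
      conv_lhs => rw [hxstruct]
      exact F_mulVec_kron α β γ hk (hα (k - 1)) lam0 ψ hψrec D w
    have hPwe : (∑ i ∈ Finset.range (k + 1), ψ i • D i) *ᵥ w = (C * Y) *ᵥ y := by
      funext r
      have h5 := congrFun (hFx2.symm.trans hFx3) (⟨0, hk0⟩, r)
      simpa using h5
    -- relate (C*Y) *ᵥ y to w
    have hYy : Y *ᵥ y + (Λ₀⁻¹ * B) *ᵥ w = 0 := by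
      have h6 : Λ₀⁻¹ *ᵥ ((Λ₀ * Y) *ᵥ y + B *ᵥ w) = 0 := by
        rw [hEq1, Matrix.mulVec_zero]
      rw [Matrix.mulVec_add, Matrix.mulVec_mulVec, Matrix.mulVec_mulVec,
        ← Matrix.mul_assoc, Matrix.nonsing_inv_mul _ hAreg, Matrix.one_mul] at h6
      exact h6
    have hCY : (C * Y) *ᵥ y = -((C * Λ₀⁻¹ * B) *ᵥ w) := by
      have h7 : Y *ᵥ y = -((Λ₀⁻¹ * B) *ᵥ w) := eq_neg_of_add_eq_zero_left hYy
      rw [← Matrix.mulVec_mulVec, h7, Matrix.mulVec_neg, Matrix.mulVec_mulVec,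
        ← Matrix.mul_assoc]
    have hGw : G₀ *ᵥ w = 0 := by
      rw [hG₀, Matrix.add_mulVec, hPwe, hCY, neg_add_cancel]
    -- w ≠ 0
    have hwne : w ≠ 0 := by
      intro h0w
      apply hne
      have hx0 : ∀ p : Fin k × Fin m, x p = 0 := by
        intro p
        have h8 : x (⟨k - 1, hkk⟩, p.2) = 0 := by
          have := congrFun h0w p.2; simpa using this
        calc x p = ψ (k - 1 - (p.1 : ℕ)) * x (⟨k - 1, hkk⟩, p.2) := congrFun hxstruct p
          _ = 0 := by rw [h8, mul_zero]
      have hy0 : y = 0 := by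
        apply vec_eq_zero_of_isUnit_det hΛY
        rw [h0w, Matrix.mulVec_zero, add_zero] at hEq1
        exact hEq1
      funext i
      rcases i with i | p
      · simp [hy0]
      · simp [hx0 p]
    exact ⟨hwne, hxstruct, hGw⟩
  · -- part (b)
    intro u hGu hune
    have hid1 : (X * Λ₀ * Y) * (Y⁻¹ * Λ₀⁻¹ * B) = X * B := by
      simp only [Matrix.mul_assoc]
      rw [← Matrix.mul_assoc Y Y⁻¹, Matrix.mul_nonsing_inv _ hY, Matrix.one_mul,
        ← Matrix.mul_assoc Λ₀ Λ₀⁻¹, Matrix.mul_nonsing_inv _ hAreg, Matrix.one_mul]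
    have hid2 : (vKron k m v * C * Y) * (Y⁻¹ * Λ₀⁻¹ * B) = vKron k m v * (C * (Λ₀⁻¹ * B)) := by
      simp only [Matrix.mul_assoc]
      rw [← Matrix.mul_assoc Y Y⁻¹, Matrix.mul_nonsing_inv _ hY, Matrix.one_mul]
    have hxbk : (fun s => (fun p : Fin k × Fin m =>
        ψ (k - 1 - (p.1 : ℕ)) * u p.2) (⟨k - 1, by omega⟩, s)) = u := by
      funext s
      simp [hψ0]
    have htop : (X * Λ₀ * Y) *ᵥ (-((Y⁻¹ * Λ₀⁻¹ * B) *ᵥ u))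
        + (Matrix.of fun r (q : Fin k × Fin m) =>
            if (q.1 : ℕ) = k - 1 then (X * B) r q.2 else 0) *ᵥ
          (fun p : Fin k × Fin m => ψ (k - 1 - (p.1 : ℕ)) * u p.2) = 0 := by
      rw [topright_mulVec hk (X * B) _]
      rw [hxbk]
      rw [Matrix.mulVec_neg, Matrix.mulVec_mulVec, hid1]
      exact neg_add_cancel _
    have hbot : (-(vKron k m v * C * Y)) *ᵥ (-((Y⁻¹ * Λ₀⁻¹ * B) *ᵥ u))
        + L₀ *ᵥ (fun p : Fin k × Fin m => ψ (k - 1 - (p.1 : ℕ)) * u p.2) = 0 := by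
      have hb1 : (-(vKron k m v * C * Y)) *ᵥ (-((Y⁻¹ * Λ₀⁻¹ * B) *ᵥ u))
          = vKron k m v *ᵥ ((C * (Λ₀⁻¹ * B)) *ᵥ u) := by
        rw [Matrix.neg_mulVec, Matrix.mulVec_neg, neg_neg, Matrix.mulVec_mulVec, hid2,
          ← Matrix.mulVec_mulVec]
      have hb2 : L₀ *ᵥ (fun p : Fin k × Fin m => ψ (k - 1 - (p.1 : ℕ)) * u p.2)
          = vKron k m v *ᵥ ((∑ i ∈ Finset.range (k + 1), ψ i • D i) *ᵥ u) := by
        rw [hL₀, ← Matrix.mulVec_mulVec]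
        rw [F_mulVec_kron α β γ hk (hα (k - 1)) lam0 ψ hψrec D u]
        rw [← E0_mulVec ((∑ i ∈ Finset.range (k + 1), ψ i • D i) *ᵥ u)]
        rw [Matrix.mulVec_mulVec, hKE]
      rw [hb1, hb2, ← Matrix.mulVec_add, ← Matrix.add_mulVec]
      have hsum : C * (Λ₀⁻¹ * B) + (∑ i ∈ Finset.range (k + 1), ψ i • D i) = G₀ := by
        rw [hG₀, ← Matrix.mul_assoc]
        exact add_comm _ _
      rw [hsum, hGu, Matrix.mulVec_zero]
    constructor
    · rw [h𝓛₀, Matrix.fromBlocks_mulVec]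
      simp only [Sum.elim_comp_inl, Sum.elim_comp_inr]
      funext i
      rcases i with i | p
      · simpa using congrFun htop i
      · simpa using congrFun hbot p
    · obtain ⟨r, hr⟩ : ∃ r, u r ≠ 0 := by
        by_contra h
        push_neg at h
        exact hune (funext h)
      intro hcon
      have h9 := congrFun hcon (Sum.inr (⟨k - 1, hkk⟩, r))
      simp only [Sum.elim_inr, Pi.zero_apply] at h9
      rw [show k - 1 - ((⟨k - 1, hkk⟩ : Fin k) : ℕ) = 0 by simp, hψ0, one_mul] at h9
      exact hr h9
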